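/- arXiv:math/0310158 — 3 statements merged into one kernel-verified Lean document; each statement's English description precedes it below -/
import Mathlib

section
/- Let G be a finite group with subgroups H and K. Then the number of double cosets |H\G/K| equals the sum over a left transversal Ω of N_G(K) in G of the quantities [N_G(K) : K] · |ℓKℓ⁻¹ ∩ H| / |H|, i.e. |H\G/K| = Σ_{ℓ ∈ Ω} [N_G(K):K] · |ℓKℓ⁻¹ ∩ H| / |H|. -/
open MulAction

section Aux

variable {G : Type*} [Group G] [Fintype G] (H K : Subgroup G)

/-- The action of `H × K` on `G` by `(h, k) • x = h * x * k⁻¹`. -/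
def dosetAction : MulAction (H × K) G where
  smul := fun p x => (p.1 : G) * x * (p.2 : G)⁻¹
  one_smul := fun x => by
    show ((1 : H) : G) * x * ((1 : K) : G)⁻¹ = x
    simp
  mul_smul := fun p q x => by
    show ((p.1 * q.1 : H) : G) * x * ((p.2 * q.2 : K) : G)⁻¹
        = (p.1 : G) * ((q.1 : G) * x * (q.2 : G)⁻¹) * (p.2 : G)⁻¹
    push_cast
    group

lemma doset_fiber_card_mul (a : G) :
    Nat.card {x : G // DoubleCoset.mk H K x = DoubleCoset.mk H K a}
      * Nat.card ((K.map (MulAut.conj a).toMonoidHom) ⊓ H : Subgroup G)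
      = Nat.card H * Nat.card K := by
  classical
  letI := dosetAction H K
  have hsmul : ∀ (p : H × K) (x : G), p • x = (p.1 : G) * x * (p.2 : G)⁻¹ := fun _ _ => rfl
  -- orbit = fiber
  have horb : ∀ x : G, x ∈ orbit (H × K) a ↔ DoubleCoset.mk H K x = DoubleCoset.mk H K a := by
    intro x
    rw [mem_orbit_iff]
    constructor
    · rintro ⟨p, rfl⟩
      rw [hsmul]
      symm
      rw [DoubleCoset.eq]
      exact ⟨p.1, p.1.2, (p.2 : G)⁻¹, K.inv_mem p.2.2, rfl⟩
    · intro hx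
      obtain ⟨h, hh, k, hk, rfl⟩ := (DoubleCoset.eq H K a x).mp hx.symm
      exact ⟨(⟨h, hh⟩, ⟨k⁻¹, K.inv_mem hk⟩), by rw [hsmul]; simp⟩
  have e1 : Nat.card (orbit (H × K) a) = Nat.card {x : G // DoubleCoset.mk H K x = DoubleCoset.mk H K a} :=
    Nat.card_congr (Equiv.subtypeEquivRight horb)
  -- stabilizer ≃ (aKa⁻¹ ⊓ H)
  have e2 : Nat.card (stabilizer (H × K) a)
      = Nat.card ((K.map (MulAut.conj a).toMonoidHom) ⊓ H : Subgroup G) := by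
    refine Nat.card_congr ?_
    refine
      { toFun := fun p => ⟨((p : H × K).1 : G), ?_⟩
        invFun := fun x => ⟨(⟨(x : G), x.2.2⟩, ⟨a⁻¹ * (x : G) * a, ?_⟩), ?_⟩
        left_inv := ?_
        right_inv := ?_ }
    · have hp := p.2
      rw [mem_stabilizer_iff, hsmul] at hp
      refine Subgroup.mem_inf.mpr ⟨Subgroup.mem_map.mpr ⟨((p : H × K).2 : G), (p : H × K).2.2, ?_⟩,
        (p : H × K).1.2⟩
      show a * ((p : H × K).2 : G) * a⁻¹ = _
      have h2 : ((p : H × K).1 : G) * a = a * ((p : H × K).2 : G) :=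
        mul_inv_eq_iff_eq_mul.mp hp
      rw [← h2]; group
    · obtain ⟨k, hk, hka⟩ := Subgroup.mem_map.mp (Subgroup.mem_inf.mp x.2).1
      have : a⁻¹ * (x : G) * a = k := by
        rw [← hka]; show a⁻¹ * (a * k * a⁻¹) * a = k; group
      rw [this]; exact hk
    · rw [mem_stabilizer_iff, hsmul]
      show (x : G) * a * (a⁻¹ * (x : G) * a)⁻¹ = a
      group
    · intro p
      ext
      · rfl
      · show a⁻¹ * ((p : H × K).1 : G) * a = ((p : H × K).2 : G)
        have hp := p.2
        rw [mem_stabilizer_iff, hsmul] at hp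
        have h2 : ((p : H × K).1 : G) * a = a * ((p : H × K).2 : G) :=
          mul_inv_eq_iff_eq_mul.mp hp
        rw [mul_assoc, h2]; group
    · intro x
      rfl
  letI : Fintype (orbit (H × K) a) := Fintype.ofFinite _
  have hmain := card_orbit_mul_card_stabilizer_eq_card_group (H × K) a
  rw [← Nat.card_eq_fintype_card, ← Nat.card_eq_fintype_card, ← Nat.card_eq_fintype_card,
    e1, e2] at hmain
  rw [hmain, Nat.card_prod]

end Aux

theorem card_doset_eq_sum_over_transversal
    {G : Type*} [Group G] [Fintype G] (H K : Subgroup G) (Ω : Finset G)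
    (hΩ : Subgroup.IsComplement (Ω : Set G) (Subgroup.normalizer (K : Set G) : Set G)) :
    (Nat.card (DoubleCoset.Quotient (H : Set G) (K : Set G)) : ℚ)
      = ∑ ℓ ∈ Ω,
          ((K.relIndex (Subgroup.normalizer (K : Set G)) : ℚ)
            * (Nat.card ((K.map (MulAut.conj ℓ).toMonoidHom) ⊓ H : Subgroup G) : ℚ))
          / (Nat.card H : ℚ) := by
  classical
  set N := Subgroup.normalizer (K : Set G) with hN
  haveI : Finite (DoubleCoset.Quotient (H : Set G) (K : Set G)) := Quotient.finite _
  letI : Fintype (DoubleCoset.Quotient (H : Set G) (K : Set G)) := Fintype.ofFinite _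
  set f : G → ℚ := fun g =>
    (Nat.card ((K.map (MulAut.conj g).toMonoidHom) ⊓ H : Subgroup G) : ℚ)
      / ((Nat.card H : ℚ) * (Nat.card K : ℚ)) with hf
  have hH0 : (Nat.card H : ℚ) ≠ 0 := by
    exact_mod_cast Nat.card_pos (α := H).ne'
  have hK0 : (Nat.card K : ℚ) ≠ 0 := by
    exact_mod_cast Nat.card_pos (α := K).ne'
  -- step 1 : card quotient = sum over G of f
  have step1 : (Nat.card (DoubleCoset.Quotient (H : Set G) (K : Set G)) : ℚ) = ∑ g : G, f g := by
    rw [Nat.card_eq_fintype_card, ← Fintype.sum_fiberwise (DoubleCoset.mk H K) f]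
    rw [Fintype.card_eq_sum_ones]
    push_cast
    refine Finset.sum_congr rfl fun q _ => ?_
    -- inner fiber sum equals 1
    have hfib : ∀ b : {x : G // DoubleCoset.mk H K x = q},
        f b = (Nat.card {x : G // DoubleCoset.mk H K x = q} : ℚ)⁻¹ := by
      intro b
      have hkey := doset_fiber_card_mul H K (b : G)
      rw [b.2] at hkey
      have hc : ((Nat.card {x : G // DoubleCoset.mk H K x = q} : ℚ))
          * (Nat.card ((K.map (MulAut.conj (b : G)).toMonoidHom) ⊓ H : Subgroup G) : ℚ)
          = (Nat.card H : ℚ) * (Nat.card K : ℚ) := by exact_mod_cast hkey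
      have hn0 : (Nat.card {x : G // DoubleCoset.mk H K x = q} : ℚ) ≠ 0 := by
        intro h0
        rw [h0, zero_mul] at hc
        exact (mul_ne_zero hH0 hK0) hc.symm
      have hm0 : (Nat.card ((K.map (MulAut.conj (b : G)).toMonoidHom) ⊓ H : Subgroup G) : ℚ)
          ≠ 0 := by
        intro h0
        rw [h0, mul_zero] at hc
        exact (mul_ne_zero hH0 hK0) hc.symm
      show (Nat.card ((K.map (MulAut.conj (b : G)).toMonoidHom) ⊓ H : Subgroup G) : ℚ)
          / ((Nat.card H : ℚ) * (Nat.card K : ℚ))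
          = (Nat.card {x : G // DoubleCoset.mk H K x = q} : ℚ)⁻¹
      rw [← hc, mul_comm (Nat.card {x : G // DoubleCoset.mk H K x = q} : ℚ), ← div_div,
        div_self hm0, one_div]
    rw [Finset.sum_congr rfl (fun b _ => hfib b), Finset.sum_const, Finset.card_univ]
    have hne : Nonempty {x : G // DoubleCoset.mk H K x = q} := ⟨⟨q.out, DoubleCoset.out_eq' H K q⟩⟩
    have hpos : (0 : ℚ) < (Fintype.card {x : G // DoubleCoset.mk H K x = q} : ℚ) := by
      exact_mod_cast Fintype.card_pos
    rw [nsmul_eq_mul, Nat.card_eq_fintype_card, mul_inv_cancel₀ hpos.ne']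
  -- step 2 : reindex the sum over G via the complement
  have step2 : ∑ g : G, f g = ∑ p : ↥(Ω : Set G) × ↥(N : Set G), f ((p.1 : G) * (p.2 : G)) := by
    exact (Fintype.sum_bijective _ hΩ _ f (fun p => rfl)).symm
  -- conjugation invariance
  have hconjn : ∀ n : G, n ∈ N → K.map (MulAut.conj n).toMonoidHom = K := by
    intro n hn
    ext x
    simp only [Subgroup.mem_map, MulEquiv.coe_toMonoidHom, MulAut.conj_apply]
    constructor
    · rintro ⟨y, hy, rfl⟩
      exact (Subgroup.mem_normalizer_iff.mp hn y).mp hy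
    · intro hx
      exact ⟨n⁻¹ * x * n, by
        have := (Subgroup.mem_normalizer_iff.mp (N.inv_mem hn) x).mp hx
        simpa [mul_assoc] using this, by group⟩
  have hfmul : ∀ (ℓ : G) (n : G), n ∈ N → f (ℓ * n) = f ℓ := by
    intro ℓ n hn
    have hcomp : (MulAut.conj (ℓ * n)).toMonoidHom
        = ((MulAut.conj ℓ).toMonoidHom).comp ((MulAut.conj n).toMonoidHom) := by
      ext x
      simp [mul_assoc]
    have hmaps : K.map (MulAut.conj (ℓ * n)).toMonoidHom = K.map (MulAut.conj ℓ).toMonoidHom := by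
      rw [hcomp, ← Subgroup.map_map, hconjn n hn]
    simp only [hf, hmaps]
  -- cardinality of N
  have hNcard : (Nat.card N : ℚ) = (K.relIndex N : ℚ) * (Nat.card K : ℚ) := by
    have h1 : Nat.card (K.subgroupOf N) * (K.subgroupOf N).index = Nat.card N :=
      Subgroup.card_mul_index _
    have h2 : Nat.card (K.subgroupOf N) = Nat.card K :=
      Nat.card_congr (Subgroup.subgroupOfEquivOfLe Subgroup.le_normalizer).toEquiv
    have h3 : K.relIndex N = (K.subgroupOf N).index := rfl
    rw [h3, ← h1, h2]
    push_cast
    ring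
  calc (Nat.card (DoubleCoset.Quotient (H : Set G) (K : Set G)) : ℚ)
      = ∑ g : G, f g := step1
    _ = ∑ p : ↥(Ω : Set G) × ↥(N : Set G), f ((p.1 : G) * (p.2 : G)) := step2
    _ = ∑ ℓ : ↥(Ω : Set G), ∑ n : ↥(N : Set G), f ((ℓ : G) * (n : G)) := by
        rw [Fintype.sum_prod_type]
    _ = ∑ ℓ : ↥(Ω : Set G), (Nat.card N : ℚ) * f (ℓ : G) := by
        refine Finset.sum_congr rfl fun ℓ _ => ?_
        have h1 : ∑ n : ↥(N : Set G), f ((ℓ : G) * (n : G)) = ∑ _n : ↥(N : Set G), f (ℓ : G) :=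
          Finset.sum_congr rfl fun n _ => hfmul (ℓ : G) (n : G) n.2
        rw [h1, Finset.sum_const, Finset.card_univ, nsmul_eq_mul]
        congr 2
        rw [← Nat.card_eq_fintype_card]
        exact Nat.card_congr (Equiv.subtypeEquivRight fun x => Iff.rfl)
    _ = ∑ ℓ ∈ Ω, (Nat.card N : ℚ) * f ℓ := by
        rw [Finset.sum_set_coe (f := fun ℓ => (Nat.card N : ℚ) * f ℓ), Finset.toFinset_coe]
    _ = _ := by
        refine Finset.sum_congr rfl fun ℓ _ => ?_
        rw [hf, hNcard]
        field_simp
end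

section
/- Let G be a finite group with subgroups H and K. Then |H\G/K| = (1/|H|) · Σ_{a ∈ H} |G| · |K ∩ C(a)| / (|K| · |C(a)|), where C(a) denotes the conjugacy class of a in G. -/
open MulAction

section Aux

variable {G : Type*} [Group G]

/-- The fiber of conjugation over `c` is in bijection with the centralizer of `h`. -/
private def conjFiberEquiv (h c g0 : G) (hg0 : g0⁻¹ * h * g0 = c) :
    {g : G // g⁻¹ * h * g = c} ≃ {z : G // h * z = z * h} where
  toFun g := ⟨g.1 * g0⁻¹, by
    have e : g.1⁻¹ * h * g.1 = g0⁻¹ * h * g0 := g.2.trans hg0.symm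
    have e2 := congrArg (fun x => g.1 * x * g0⁻¹) e
    simpa [mul_assoc] using e2⟩
  invFun z := ⟨z.1 * g0, by
    have hz : z.1⁻¹ * (h * z.1) = h := by rw [z.2, inv_mul_cancel_left]
    have e2 := congrArg (fun x => g0⁻¹ * x * g0) hz
    simp only [← hg0]
    simpa [mul_assoc] using e2⟩
  left_inv g := by ext; simp
  right_inv z := by ext; simp

private lemma card_conj_fiber [Fintype G] (h : G) (P : G → Prop) :
    Nat.card {g : G // P (g⁻¹ * h * g)}
      = Nat.card {c : G // IsConj h c ∧ P c} * Nat.card {z : G // h * z = z * h} := by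
  classical
  have E : {g : G // P (g⁻¹ * h * g)}
      ≃ Σ c : {c : G // IsConj h c ∧ P c}, {g : G // g⁻¹ * h * g = c} :=
    { toFun := fun g => ⟨⟨g.1⁻¹ * h * g.1,
        ⟨isConj_iff.mpr ⟨g.1⁻¹, by rw [inv_inv]⟩, g.2⟩⟩, ⟨g.1, rfl⟩⟩
      invFun := fun p => ⟨p.2.1, by rw [p.2.2]; exact p.1.2.2⟩
      left_inv := fun g => rfl
      right_inv := fun p => by
        rcases p with ⟨⟨c, hc⟩, g, hg⟩
        exact Sigma.subtype_ext (Subtype.ext hg) rfl }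
  have hconst : ∀ c : {c : G // IsConj h c ∧ P c},
      Nat.card {g : G // g⁻¹ * h * g = c.1} = Nat.card {z : G // h * z = z * h} := by
    rintro ⟨c, hc, -⟩
    obtain ⟨u, hu⟩ := isConj_iff.mp hc
    exact Nat.card_congr (conjFiberEquiv h c u⁻¹ (by rw [inv_inv]; exact hu))
  rw [Nat.card_congr E, Nat.card_eq_fintype_card, Fintype.card_sigma,
    Finset.sum_congr rfl (fun c _ =>
      show Fintype.card _ = Nat.card {z : G // h * z = z * h} by
        rw [← Nat.card_eq_fintype_card]; exact hconst c),
    Finset.sum_const, smul_eq_mul, Finset.card_univ, ← Nat.card_eq_fintype_card]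

/-- The action of `H × K` on `G` by `(h, k) • g = h * g * k⁻¹`. -/
private instance dosetAction_s5 (H K : Subgroup G) : MulAction (H × K) G where
  smul p g := (p.1 : G) * g * (p.2 : G)⁻¹
  one_smul g := by show (1 : G) * g * (1 : G)⁻¹ = g; simp
  mul_smul p q g := by
    show ((p.1 * q.1 : H) : G) * g * ((p.2 * q.2 : K) : G)⁻¹
        = (p.1 : G) * ((q.1 : G) * g * (q.2 : G)⁻¹) * (p.2 : G)⁻¹
    simp [mul_assoc]

private lemma doset_smul_def (H K : Subgroup G) (p : H × K) (g : G) :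
    p • g = (p.1 : G) * g * (p.2 : G)⁻¹ := rfl

private lemma conj_mem_of_fixed {H K : Subgroup G} {a : H} {k : K} {g : G}
    (hp : (a : G) * g * (k : G)⁻¹ = g) : g⁻¹ * (a : G) * g = (k : G) := by
  have h1 : g * (k : G) = (a : G) * g := by
    have := congrArg (fun x => x * (k : G)) hp
    simpa [mul_assoc] using this.symm
  rw [mul_assoc, ← h1, inv_mul_cancel_left]

private def dosetQuotEquivOrbits (H K : Subgroup G) :
    DoubleCoset.Quotient (H : Set G) (K : Set G) ≃ orbitRel.Quotient (H × K) G :=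
  Quotient.congrRight (fun a b => by
    rw [DoubleCoset.rel_iff]
    show _ ↔ (orbitRel (H × K) G) a b
    rw [orbitRel_apply, mem_orbit_iff]
    constructor
    · rintro ⟨h, hh, k, hk, rfl⟩
      exact ⟨((⟨h, hh⟩ : H)⁻¹, ⟨k, hk⟩), by
        rw [doset_smul_def]; simp [mul_assoc]⟩
    · rintro ⟨⟨h, k⟩, rfl⟩
      rw [doset_smul_def]
      exact ⟨(h : G)⁻¹, H.inv_mem h.2, (k : G), k.2, by simp [mul_assoc]⟩)

end Aux

set_option maxHeartbeats 1000000 in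
theorem card_doset_eq_class_sum
    {G : Type*} [Group G] [Fintype G] (H K : Subgroup G) [Fintype H] :
    (Nat.card (DoubleCoset.Quotient (H : Set G) (K : Set G)) : ℚ)
      = (1 / (Nat.card H : ℚ))
        * ∑ a : H,
            ((Nat.card G : ℚ) * (Nat.card {g : G // IsConj (a : G) g ∧ g ∈ K} : ℚ))
            / ((Nat.card K : ℚ) * (Nat.card {g : G // IsConj (a : G) g} : ℚ)) := by
  classical
  set Ω := orbitRel.Quotient (H × K) G with hΩ
  letI : Fintype Ω := Fintype.ofFinite _
  -- Burnside
  have burnside : (∑ p : H × K, Fintype.card (fixedBy G p))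
      = Fintype.card Ω * Fintype.card (H × K) :=
    sum_card_fixedBy_eq_card_orbits_mul_card_group (H × K) G
  -- For each a : H, summing fixed points over k : K counts `{g | g⁻¹ a g ∈ K}`
  have inner : ∀ a : H, (∑ k : K, Fintype.card (fixedBy G ((a, k) : H × K)))
      = Nat.card {g : G // g⁻¹ * (a : G) * g ∈ K} := by
    intro a
    have E : (Σ k : K, fixedBy G ((a, k) : H × K)) ≃ {g : G // g⁻¹ * (a : G) * g ∈ K} :=
      { toFun := fun p => ⟨p.2.1, by
          have hp : ((a, p.1) : H × K) • (p.2 : G) = p.2 := p.2.2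
          rw [doset_smul_def] at hp
          rw [conj_mem_of_fixed hp]; exact p.1.2⟩
        invFun := fun g => ⟨⟨g.1⁻¹ * (a : G) * g.1, g.2⟩, ⟨g.1, by
          show ((a, (⟨g.1⁻¹ * (a : G) * g.1, g.2⟩ : K)) : H × K) • g.1 = g.1
          rw [doset_smul_def]
          simp [mul_assoc]⟩⟩
        left_inv := fun p => by
          rcases p with ⟨k, g, hg⟩
          have hp : ((a, k) : H × K) • (g : G) = g := hg
          rw [doset_smul_def] at hp
          exact Sigma.subtype_ext (Subtype.ext (conj_mem_of_fixed hp)) rfl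
        right_inv := fun g => rfl }
    rw [Nat.card_congr E.symm, Nat.card_eq_fintype_card, Fintype.card_sigma]
  -- notation
  have key : ∀ a : H, (Nat.card G) * Nat.card {g : G // IsConj (a : G) g ∧ g ∈ K}
      = Nat.card {g : G // g⁻¹ * (a : G) * g ∈ K} * Nat.card {g : G // IsConj (a : G) g} := by
    intro a
    have h1 := card_conj_fiber (G := G) (a : G) (fun g => g ∈ K)
    have h2 := card_conj_fiber (G := G) (a : G) (fun _ => True)
    have e1 : Nat.card {g : G // (fun _ => True) (g⁻¹ * (a : G) * g)} = Nat.card G :=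
      Nat.card_congr (Equiv.subtypeUnivEquiv fun _ => trivial)
    have e2 : Nat.card {c : G // IsConj (a : G) c ∧ (fun _ => True) c}
        = Nat.card {g : G // IsConj (a : G) g} :=
      Nat.card_congr (Equiv.subtypeEquivRight fun _ => and_iff_left trivial)
    rw [e1, e2] at h2
    rw [h2, h1]
    ring
  have hCpos : ∀ a : H, 0 < Nat.card {g : G // IsConj (a : G) g} :=
    fun a => Nat.card_pos_iff.mpr ⟨⟨⟨(a : G), IsConj.refl _⟩⟩, inferInstance⟩
  have sum_n : (∑ a : H, (Nat.card {g : G // g⁻¹ * (a : G) * g ∈ K} : ℚ))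
      = (Nat.card Ω : ℚ) * Nat.card H * Nat.card K := by
    have h3 : (∑ a : H, Nat.card {g : G // g⁻¹ * (a : G) * g ∈ K})
        = Nat.card Ω * (Nat.card H * Nat.card K) := by
      rw [Fintype.sum_prod_type] at burnside
      calc (∑ a : H, Nat.card {g : G // g⁻¹ * (a : G) * g ∈ K})
          = ∑ a : H, ∑ k : K, Fintype.card (fixedBy G ((a, k) : H × K)) :=
            Finset.sum_congr rfl fun a _ => (inner a).symm
        _ = Fintype.card Ω * Fintype.card (H × K) := burnside
        _ = Nat.card Ω * (Nat.card H * Nat.card K) := by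
            simp [Nat.card_eq_fintype_card, Fintype.card_prod]
    rw [← Nat.cast_sum, h3]
    push_cast
    ring
  have hH : (Nat.card H : ℚ) ≠ 0 := by
    exact_mod_cast (Nat.card_pos_iff.mpr ⟨⟨1⟩, inferInstance⟩).ne'
  have hK : (Nat.card K : ℚ) ≠ 0 := by
    exact_mod_cast (Nat.card_pos_iff.mpr ⟨⟨1⟩, inferInstance⟩).ne'
  have hcard : (Nat.card (DoubleCoset.Quotient (H : Set G) (K : Set G)) : ℚ) = Nat.card Ω := by
    exact_mod_cast congrArg (Nat.cast : ℕ → ℚ) (Nat.card_congr (dosetQuotEquivOrbits H K))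
  rw [hcard]
  have hterm : ∀ a : H,
      ((Nat.card G : ℚ) * (Nat.card {g : G // IsConj (a : G) g ∧ g ∈ K} : ℚ))
        / ((Nat.card K : ℚ) * (Nat.card {g : G // IsConj (a : G) g} : ℚ))
      = (Nat.card {g : G // g⁻¹ * (a : G) * g ∈ K} : ℚ) / (Nat.card K : ℚ) := by
    intro a
    have hC : (Nat.card {g : G // IsConj (a : G) g} : ℚ) ≠ 0 := by
      exact_mod_cast (hCpos a).ne'
    have hk := key a
    have hkQ : (Nat.card G : ℚ) * (Nat.card {g : G // IsConj (a : G) g ∧ g ∈ K} : ℚ)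
        = (Nat.card {g : G // g⁻¹ * (a : G) * g ∈ K} : ℚ) * (Nat.card {g : G // IsConj (a : G) g} : ℚ) := by
      exact_mod_cast congrArg (Nat.cast : ℕ → ℚ) hk
    rw [hkQ]
    exact mul_div_mul_right _ _ hC
  rw [Finset.sum_congr rfl fun a _ => hterm a, ← Finset.sum_div, sum_n]
  field_simp
end

section
/- Let G be the dihedral group D₄ = ⟨x, y : x⁴ = y² = (xy)² = 1⟩. There do not exist elements c₁, c₂, c₃ ∈ D₄ with ⟨c₁⟩ conjugate to ⟨x⟩, ⟨c₂⟩ conjugate to ⟨x²⟩, ⟨c₃⟩ conjugate to ⟨x²⟩, such that c₁c₂c₃ = 1 and c₁, c₂, c₃ generate D₄. -/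
open DihedralGroup Subgroup

lemma aux_eq_r2 (c : DihedralGroup 4)
    (h : Subgroup.zpowers c = Subgroup.zpowers (DihedralGroup.r 2)) :
    c = DihedralGroup.r 2 := by
  have hm : c ∈ Subgroup.zpowers (DihedralGroup.r 2) := h ▸ Subgroup.mem_zpowers c
  obtain ⟨k, hk'⟩ := hm
  have hk : (DihedralGroup.r 2 : DihedralGroup 4) ^ k = c := hk'
  have ho : orderOf (DihedralGroup.r 2 : DihedralGroup 4) = 2 :=
    orderOf_eq_prime (by decide) (by decide)
  have hmod : (DihedralGroup.r 2 : DihedralGroup 4) ^ k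
      = (DihedralGroup.r 2) ^ (k % 2) := by
    rw [← zpow_mod_orderOf, ho]; norm_num
  rcases Int.emod_two_eq k with h0 | h1
  · exfalso
    have hc1 : c = 1 := by rw [← hk, hmod, h0, zpow_zero]
    rw [hc1, Subgroup.zpowers_one_eq_bot] at h
    have : (DihedralGroup.r 2 : DihedralGroup 4) ∈ (⊥ : Subgroup (DihedralGroup 4)) :=
      h ▸ Subgroup.mem_zpowers _
    rw [Subgroup.mem_bot] at this
    exact (by decide : (DihedralGroup.r 2 : DihedralGroup 4) ≠ 1) this
  · rw [← hk, hmod, h1, zpow_one]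

theorem no_generating_vector_for_dihedral_signature :
    ¬ ∃ c₁ c₂ c₃ : DihedralGroup 4,
      (∃ g : DihedralGroup 4,
        Subgroup.zpowers c₁
          = (Subgroup.zpowers (DihedralGroup.r 1)).map (MulAut.conj g).toMonoidHom)
      ∧ (∃ g : DihedralGroup 4,
        Subgroup.zpowers c₂
          = (Subgroup.zpowers (DihedralGroup.r 2)).map (MulAut.conj g).toMonoidHom)
      ∧ (∃ g : DihedralGroup 4,
        Subgroup.zpowers c₃
          = (Subgroup.zpowers (DihedralGroup.r 2)).map (MulAut.conj g).toMonoidHom)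
      ∧ c₁ * c₂ * c₃ = 1
      ∧ Subgroup.closure {c₁, c₂, c₃} = ⊤ := by
  rintro ⟨c₁, c₂, c₃, ⟨g₁, h₁⟩, ⟨g₂, h₂⟩, ⟨g₃, h₃⟩, hprod, -⟩
  rw [MonoidHom.map_zpowers] at h₁ h₂ h₃
  have hc : ∀ g : DihedralGroup 4,
      (MulAut.conj g).toMonoidHom (DihedralGroup.r 2) = DihedralGroup.r 2 := by decide
  rw [hc] at h₂ h₃
  have hc₂ := aux_eq_r2 c₂ h₂
  have hc₃ := aux_eq_r2 c₃ h₃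
  subst hc₂ hc₃
  have hr : (DihedralGroup.r 2 : DihedralGroup 4) * DihedralGroup.r 2 = 1 := by decide
  have hc₁ : c₁ = 1 := by
    rw [mul_assoc, hr, mul_one] at hprod
    exact hprod
  rw [hc₁, Subgroup.zpowers_one_eq_bot] at h₁
  have hmem : (MulAut.conj g₁).toMonoidHom (DihedralGroup.r 1)
      ∈ (⊥ : Subgroup (DihedralGroup 4)) := h₁ ▸ Subgroup.mem_zpowers _
  rw [Subgroup.mem_bot] at hmem
  have : DihedralGroup.r 1 = (1 : DihedralGroup 4) :=
    (MulAut.conj g₁).injective (by simpa using hmem)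
  exact (by decide : (DihedralGroup.r 1 : DihedralGroup 4) ≠ 1) this
end
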